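/- The Chen–Epstein density is nonnegative: for all $\alpha,\beta,c,y\in\mathbb{R}$, $f^{\alpha,\beta,c}(y)=\frac{1}{\sqrt{2\pi}}e^{-\frac{(y-\beta)^2-2\alpha(|y-c|-|c-\beta|)+\alpha^2}{2}}-\alpha e^{2\alpha|y-c|}\Phi(-|c-\beta|-|y-c|-\alpha)\ge0$. -/

import Mathlib

open MeasureTheory

/-- The standard normal cumulative distribution function. -/
noncomputable def stdNormalCDF (x : ℝ) : ℝ :=
  (Real.sqrt (2 * Real.pi))⁻¹ * ∫ y in Set.Iic x, Real.exp (-y ^ 2 / 2)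

/-- The Chen–Epstein density `f^{α,β,c}` arising in the nonlinear CLT with mean
uncertainty. -/
noncomputable def chenEpsteinDensity (α β c y : ℝ) : ℝ :=
  (Real.sqrt (2 * Real.pi))⁻¹ *
      Real.exp (-((y - β) ^ 2 - 2 * α * (|y - c| - |c - β|) + α ^ 2) / 2)
    - α * Real.exp (2 * α * |y - c|) * stdNormalCDF (-|c - β| - |y - c| - α)

open Set Filter

lemma exp_sq_integrable : Integrable (fun y : ℝ => Real.exp (-y ^ 2 / 2)) := by
  have := integrable_exp_neg_mul_sq (b := (1/2 : ℝ)) (by norm_num)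
  convert this using 2 with x
  ring_nf

lemma stdNormalCDF_nonneg (x : ℝ) : 0 ≤ stdNormalCDF x := by
  apply mul_nonneg (by positivity)
  apply integral_nonneg
  intro y
  positivity

lemma mills (t : ℝ) (ht : 0 < t) :
    t * ∫ y in Set.Iic (-t), Real.exp (-y ^ 2 / 2) ≤ Real.exp (-t ^ 2 / 2) := by
  have hsym : (∫ y in Set.Iic (-t), Real.exp (-y ^ 2 / 2))
      = ∫ y in Set.Ioi t, Real.exp (-y ^ 2 / 2) := by
    have h1 : (∫ y in Set.Iic (-t), Real.exp (-(-y) ^ 2 / 2))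
        = ∫ y in Set.Ioi (-(-t)), Real.exp (-y ^ 2 / 2) :=
      integral_comp_neg_Iic (-t) (fun y => Real.exp (-y ^ 2 / 2))
    simp only [neg_neg] at h1
    rw [← h1]
    apply setIntegral_congr_fun measurableSet_Iic
    intro z _
    norm_num
  rw [hsym]
  have hint : IntegrableOn (fun y : ℝ => Real.exp (-y ^ 2 / 2)) (Set.Ioi t) :=
    exp_sq_integrable.integrableOn
  have hint2 : IntegrableOn (fun y : ℝ => y * Real.exp (-y ^ 2 / 2)) (Set.Ioi t) := by
    have := integrable_mul_exp_neg_mul_sq (b := (1/2 : ℝ)) (by norm_num)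
    have h2 : Integrable (fun y : ℝ => y * Real.exp (-y ^ 2 / 2)) := by
      convert this using 2 with x
      ring_nf
    exact h2.integrableOn
  have key : (∫ y in Set.Ioi t, y * Real.exp (-y ^ 2 / 2)) = Real.exp (-t ^ 2 / 2) := by
    have heq := integral_Ioi_of_hasDerivAt_of_tendsto'
      (f := fun y : ℝ => -Real.exp (-y ^ 2 / 2))
      (f' := fun y : ℝ => y * Real.exp (-y ^ 2 / 2)) (a := t) (m := 0)
      ?_ hint2 ?_
    · rw [heq]; ring
    · intro x _
      have h1 : HasDerivAt (fun y : ℝ => -y ^ 2 / 2) (-x) x := by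
        have h0 := ((hasDerivAt_pow 2 x).neg.div_const 2)
        refine h0.congr_deriv ?_
        norm_num; ring
      have h2 := (h1.exp).neg
      convert h2 using 1
      · rfl
      · ring
    · have hsq : Tendsto (fun y : ℝ => y ^ 2) atTop atTop := tendsto_pow_atTop two_ne_zero
      have h1 : Tendsto (fun y : ℝ => -(y ^ 2 / 2)) atTop atBot :=
        tendsto_neg_atBot_iff.mpr (hsq.atTop_div_const (by norm_num))
      have h2 : Tendsto (fun y : ℝ => Real.exp (-y ^ 2 / 2)) atTop (nhds 0) := by
        have h3 := Real.tendsto_exp_atBot.comp h1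
        simp only [Function.comp_def] at h3
        exact h3.congr fun y => by simp [Function.comp, neg_div]
      simpa using h2.neg
  rw [← key]
  rw [show t * ∫ y in Set.Ioi t, Real.exp (-y ^ 2 / 2)
      = ∫ y in Set.Ioi t, t * Real.exp (-y ^ 2 / 2) from (integral_const_mul t _).symm]
  apply setIntegral_mono_on (hint.const_mul t) hint2 measurableSet_Ioi
  intro x hx
  have : 0 < Real.exp (-x ^ 2 / 2) := Real.exp_pos _
  nlinarith [le_of_lt (Set.mem_Ioi.mp hx)]

/-- The Chen–Epstein density is nonnegative. -/
theorem chenEpsteinDensity_nonneg (α β c y : ℝ) :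
    0 ≤ chenEpsteinDensity α β c y := by
  unfold chenEpsteinDensity
  set a := |c - β| with ha
  set b := |y - c| with hb
  have ha0 : 0 ≤ a := abs_nonneg _
  have hb0 : 0 ≤ b := abs_nonneg _
  rcases le_or_gt α 0 with hα | hα
  · have h1 : 0 ≤ (Real.sqrt (2 * Real.pi))⁻¹ *
        Real.exp (-((y - β) ^ 2 - 2 * α * (b - a) + α ^ 2) / 2) := by positivity
    have h2 : 0 ≤ -α * (Real.exp (2 * α * b) * stdNormalCDF (-a - b - α)) := by
      apply mul_nonneg (by linarith)
      exact mul_nonneg (Real.exp_pos _).le (stdNormalCDF_nonneg _)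
    nlinarith
  · set t := a + b + α with htdef
    have ht : 0 < t := by positivity
    -- bound on the CDF term
    have hm := mills t ht
    have hcdf : stdNormalCDF (-a - b - α)
        = (Real.sqrt (2 * Real.pi))⁻¹ * ∫ z in Set.Iic (-t), Real.exp (-z ^ 2 / 2) := by
      unfold stdNormalCDF
      congr 2
      congr 2
      rw [htdef]; ring
    have hsqrt : 0 < (Real.sqrt (2 * Real.pi))⁻¹ := by positivity
    have hΦ : α * stdNormalCDF (-a - b - α)
        ≤ (Real.sqrt (2 * Real.pi))⁻¹ * Real.exp (-t ^ 2 / 2) := by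
      rw [hcdf]
      have hΦ0 : 0 ≤ ∫ z in Set.Iic (-t), Real.exp (-z ^ 2 / 2) := by
        apply integral_nonneg; intro z; positivity
      have hαt : α ≤ t := by linarith
      calc α * ((Real.sqrt (2 * Real.pi))⁻¹ * ∫ z in Set.Iic (-t), Real.exp (-z ^ 2 / 2))
          ≤ t * ((Real.sqrt (2 * Real.pi))⁻¹ * ∫ z in Set.Iic (-t), Real.exp (-z ^ 2 / 2)) := by
            apply mul_le_mul_of_nonneg_right hαt (by positivity)
        _ = (Real.sqrt (2 * Real.pi))⁻¹ * (t * ∫ z in Set.Iic (-t), Real.exp (-z ^ 2 / 2)) := by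
            ring
        _ ≤ (Real.sqrt (2 * Real.pi))⁻¹ * Real.exp (-t ^ 2 / 2) :=
            mul_le_mul_of_nonneg_left hm hsqrt.le
    -- bound on the exponential term
    have htri : (y - β) ^ 2 ≤ (a + b) ^ 2 := by
      have h1 : |y - β| ≤ b + a := by
        calc |y - β| = |(y - c) + (c - β)| := by ring_nf
          _ ≤ |y - c| + |c - β| := abs_add_le _ _
      have h2 : 0 ≤ |y - β| := abs_nonneg _
      nlinarith [sq_abs (y - β)]
    have hexp : Real.exp (2 * α * b) * Real.exp (-t ^ 2 / 2)
        ≤ Real.exp (-((y - β) ^ 2 - 2 * α * (b - a) + α ^ 2) / 2) := by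
      rw [← Real.exp_add]
      apply Real.exp_le_exp.mpr
      rw [htdef]
      nlinarith
    calc (0:ℝ) = Real.exp (2 * α * b) *
          ((Real.sqrt (2 * Real.pi))⁻¹ * Real.exp (-t ^ 2 / 2)
            - (Real.sqrt (2 * Real.pi))⁻¹ * Real.exp (-t ^ 2 / 2)) := by ring
      _ ≤ (Real.sqrt (2 * Real.pi))⁻¹ *
            Real.exp (-((y - β) ^ 2 - 2 * α * (b - a) + α ^ 2) / 2)
          - α * Real.exp (2 * α * b) * stdNormalCDF (-a - b - α) := by
          have e1 : Real.exp (2 * α * b) *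
              ((Real.sqrt (2 * Real.pi))⁻¹ * Real.exp (-t ^ 2 / 2))
              ≤ (Real.sqrt (2 * Real.pi))⁻¹ *
                Real.exp (-((y - β) ^ 2 - 2 * α * (b - a) + α ^ 2) / 2) := by
            have := mul_le_mul_of_nonneg_left hexp hsqrt.le
            nlinarith [Real.exp_pos (2 * α * b)]
          have e2 : α * Real.exp (2 * α * b) * stdNormalCDF (-a - b - α)
              ≤ Real.exp (2 * α * b) *
                ((Real.sqrt (2 * Real.pi))⁻¹ * Real.exp (-t ^ 2 / 2)) := by
            have hep : (0:ℝ) < Real.exp (2 * α * b) := Real.exp_pos _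
            calc α * Real.exp (2 * α * b) * stdNormalCDF (-a - b - α)
                = Real.exp (2 * α * b) * (α * stdNormalCDF (-a - b - α)) := by ring
              _ ≤ Real.exp (2 * α * b) *
                  ((Real.sqrt (2 * Real.pi))⁻¹ * Real.exp (-t ^ 2 / 2)) :=
                  mul_le_mul_of_nonneg_left hΦ hep.le
          linarith
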